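/- Consider a (p,q)-crowning connecting two distinct vertices a and b: a base path P⁰ of length p+1 from a to b, and two crown paths P¹, P² each of length q+1 from a to b, with internal vertices of the three paths pairwise disjoint, together with crown habitats H₁ = V(P⁰) ∪ V(P¹) and H₂ = V(P⁰) ∪ V(P²). Then the minimum number of edges in a set F satisfying both H₁ and H₂ equals p + 2q + 1. -/

import Mathlib

open SimpleGraph
open scoped Classical

section Helpers
variable {V : Type*}

lemma mem_support_of_edges {G : SimpleGraph V} {u w v : V} {e : Sym2 V}
    (p : G.Walk u w) (he : e ∈ p.edges) (hv : v ∈ e) : v ∈ p.support := by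
  induction e using Sym2.ind with
  | _ x y =>
    rcases Sym2.mem_iff.mp hv with rfl | rfl
    · exact Walk.fst_mem_support_of_mem_edges p he
    · exact Walk.snd_mem_support_of_mem_edges p he

lemma exists_edge_of_ne_right {G : SimpleGraph V} :
    ∀ {u w : V} (p : G.Walk u w) (v : V), v ∈ p.support → v ≠ w → ∃ e ∈ p.edges, v ∈ e := by
  intro u w p
  induction p with
  | nil =>
    intro v hv hne
    simp only [Walk.support_nil, List.mem_singleton] at hv
    exact absurd hv hne
  | @cons u c w h p ih =>
    intro v hv hne
    rw [Walk.support_cons, List.mem_cons] at hv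
    rcases hv with rfl | hv
    · exact ⟨s(v, c), by simp [Walk.edges_cons], Sym2.mem_mk_left _ _⟩
    · obtain ⟨e, he, hve⟩ := ih v hv hne
      exact ⟨e, by rw [Walk.edges_cons]; exact List.mem_cons_of_mem _ he, hve⟩

lemma exists_edge_of_ne_left {G : SimpleGraph V} :
    ∀ {u w : V} (p : G.Walk u w) (v : V), v ∈ p.support → v ≠ u → ∃ e ∈ p.edges, v ∈ e := by
  intro u w p
  induction p with
  | nil =>
    intro v hv hne
    simp only [Walk.support_nil, List.mem_singleton] at hv
    exact absurd hv hne
  | @cons u c w h p ih =>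
    intro v hv hne
    rw [Walk.support_cons, List.mem_cons] at hv
    rcases hv with rfl | hv
    · exact absurd rfl hne
    · by_cases hvc : v = c
      · subst hvc
        exact ⟨s(u, v), by simp [Walk.edges_cons], Sym2.mem_mk_right _ _⟩
      · obtain ⟨e, he, hve⟩ := ih v hv hvc
        exact ⟨e, by rw [Walk.edges_cons]; exact List.mem_cons_of_mem _ he, hve⟩

lemma length_one_of_edge {G : SimpleGraph V} {x y : V} (W : G.Walk x y) (hW : W.IsPath)
    (hxy : x ≠ y) (he : s(x, y) ∈ W.edges) : W.length = 1 := by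
  cases W with
  | nil => simp at he
  | @cons _ c _ hadj p =>
    rw [Walk.edges_cons, List.mem_cons] at he
    rw [Walk.cons_isPath_iff] at hW
    rcases he with he | he
    · rcases Sym2.eq_iff.mp he with ⟨-, rfl⟩ | ⟨hxc, hyx⟩
      · have hnil : p = Walk.nil := by
          have := SimpleGraph.Path.loop_eq ⟨p, hW.1⟩
          simpa [SimpleGraph.Path.nil] using congrArg Subtype.val this
        simp [hnil]
      · exact absurd hyx.symm hxy
    · exact absurd (Walk.fst_mem_support_of_mem_edges p he) hW.2

lemma reach_induce {F : Set (Sym2 V)} {H : Set V} {G : SimpleGraph V} :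
    ∀ {x y : V} (W : G.Walk x y), (∀ e ∈ W.edges, e ∈ F) →
      (∀ z ∈ W.support, z ∈ H) → ∀ (hx : x ∈ H) (hy : y ∈ H),
      ((SimpleGraph.fromEdgeSet F).induce H).Reachable ⟨x, hx⟩ ⟨y, hy⟩ := by
  intro x y W
  induction W with
  | nil => intro _ _ _ _; rfl
  | @cons u c w h p ih =>
    intro hF hH hx hy
    have hc : c ∈ H := hH c (by simp [Walk.support_cons])
    have hadj : ((SimpleGraph.fromEdgeSet F).induce H).Adj ⟨u, hx⟩ ⟨c, hc⟩ := by
      have : (SimpleGraph.fromEdgeSet F).Adj u c :=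
        (fromEdgeSet_adj F).mpr ⟨hF _ (by simp [Walk.edges_cons]), h.ne⟩
      exact this
    exact hadj.reachable.trans (ih (fun e heq => hF e (by rw [Walk.edges_cons]; exact List.mem_cons_of_mem _ heq))
      (fun z hz => hH z (by rw [Walk.support_cons]; exact List.mem_cons_of_mem _ hz)) hc hy)

lemma conn_card_le {W : Type*} [Fintype W] {K : SimpleGraph W} (hK : K.Connected) :
    Fintype.card W ≤ K.edgeFinset.card + 1 := by
  classical
  obtain ⟨r⟩ := hK.nonempty
  have key : ∀ v : W, v ≠ r → ∃ e : Sym2 W, e ∈ K.edgeFinset ∧ v ∈ e ∧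
      ∃ u, u ∈ e ∧ K.dist u r < K.dist v r := by
    intro v hv
    have hd : K.dist v r ≠ 0 := (hK.pos_dist_of_ne hv).ne'
    obtain ⟨p, hp⟩ := SimpleGraph.exists_walk_of_dist_ne_zero hd
    cases p with
    | nil => rw [← hp] at hd; simp at hd
    | @cons _ c _ h p' =>
      refine ⟨s(v, c), ?_, Sym2.mem_mk_left _ _, c, Sym2.mem_mk_right _ _, ?_⟩
      · rw [mem_edgeFinset]; exact h
      · have h1 : K.dist c r ≤ p'.length := SimpleGraph.dist_le p'
        have h2 : p'.length + 1 = K.dist v r := by simpa using hp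
        omega
  choose f hf1 hf2 g hg1 hg2 using fun v : {x : W // x ≠ r} => key v v.2
  have hinj : Function.Injective f := by
    intro v w hvw
    by_contra hne
    have hne' : (v : W) ≠ (w : W) := fun h => hne (Subtype.ext h)
    have hfv : f v = s((v : W), (w : W)) :=
      Sym2.eq_of_ne_mem hne' (hf2 v) (hvw ▸ hf2 w) (Sym2.mem_mk_left _ _) (Sym2.mem_mk_right _ _)
    have hgv : g v = (w : W) := by
      rcases Sym2.mem_iff.mp (hfv ▸ hg1 v) with h' | h'
      · exact absurd (h' ▸ hg2 v) (lt_irrefl _)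
      · exact h'
    have hgw : g w = (v : W) := by
      rcases Sym2.mem_iff.mp ((hvw ▸ hfv) ▸ hg1 w) with h' | h'
      · exact h'
      · exact absurd (h' ▸ hg2 w) (lt_irrefl _)
    have l1 := hg2 v
    have l2 := hg2 w
    rw [hgv] at l1
    rw [hgw] at l2
    omega
  have hcard : Fintype.card { x : W // x ≠ r } ≤ Fintype.card {e // e ∈ K.edgeFinset} := by
    apply Fintype.card_le_of_injective (fun v => ⟨f v, hf1 v⟩)
    intro v w h
    exact hinj (congrArg Subtype.val h)
  have h1 : Fintype.card {e // e ∈ K.edgeFinset} = K.edgeFinset.card := Fintype.card_coe _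
  have h2 : Fintype.card {x : W // x ≠ r} = Fintype.card W - 1 := by
    rw [Fintype.card_subtype_compl, Fintype.card_subtype_eq]
  have h3 : 0 < Fintype.card W := Fintype.card_pos_iff.mpr ⟨r⟩
  omega

lemma edge_eq_ab {x y : V} {e : Sym2 V} (hnd : ¬ e.IsDiag) (h : ∀ v ∈ e, v = x ∨ v = y) :
    e = s(x, y) := by
  induction e using Sym2.ind with
  | _ u v =>
    have hu := h u (Sym2.mem_mk_left _ _)
    have hv := h v (Sym2.mem_mk_right _ _)
    rw [Sym2.mk_isDiag_iff] at hnd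
    rcases hu with rfl | rfl <;> rcases hv with rfl | rfl
    · exact absurd rfl hnd
    · rfl
    · exact Sym2.eq_swap
    · exact absurd rfl hnd

lemma hab_lower {F : Set (Sym2 V)} (hFfin : F.Finite) (T : Finset V)
    (hconn : ((SimpleGraph.fromEdgeSet F).induce (↑T : Set V)).Connected) :
    T.card ≤ (F ∩ {e | ∀ v ∈ e, v ∈ (↑T : Set V)}).ncard + 1 := by
  classical
  set K := (SimpleGraph.fromEdgeSet F).induce (↑T : Set V) with hK
  have hsub : (↑(K.edgeFinset.image (Sym2.map (Subtype.val : (↑T : Set V) → V))) : Set (Sym2 V))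
      ⊆ F ∩ {e | ∀ v ∈ e, v ∈ (↑T : Set V)} := by
    intro e he
    rw [Finset.coe_image, Set.mem_image] at he
    obtain ⟨e', he', rfl⟩ := he
    rw [Finset.mem_coe, mem_edgeFinset] at he'
    revert he'
    induction e' using Sym2.ind with
    | _ x y =>
      intro he'
      have hadj : (SimpleGraph.fromEdgeSet F).Adj ↑x ↑y := he'
      obtain ⟨hmem, hne⟩ := (fromEdgeSet_adj F).mp hadj
      refine ⟨by simpa using hmem, ?_⟩
      intro v hv
      rw [Sym2.map_pair_eq] at hv
      rcases Sym2.mem_iff.mp hv with rfl | rfl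
      · exact x.2
      · exact y.2
  have hinj := Finset.card_image_of_injective K.edgeFinset
    (Sym2.map.injective (Subtype.val_injective))
  have hle : K.edgeFinset.card ≤ (F ∩ {e | ∀ v ∈ e, v ∈ (↑T : Set V)}).ncard := by
    rw [← hinj, ← Set.ncard_coe_finset]
    exact Set.ncard_le_ncard hsub (hFfin.inter_of_left _)
  have hcc : Fintype.card (↑T : Set V) ≤ K.edgeFinset.card + 1 := by
    convert conn_card_le hconn
  have hT : Fintype.card (↑T : Set V) = T.card := by
    rw [← Nat.card_eq_fintype_card, Nat.card_coe_set_eq, Set.ncard_coe_finset]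
  omega

end Helpers

def SatisfiesHab {V : Type*} (F : Set (Sym2 V)) (H : Set V) : Prop :=
  (∀ v ∈ H, ∃ e ∈ F, v ∈ e) ∧ ((SimpleGraph.fromEdgeSet F).induce H).Connected

theorem stmt3 {V : Type*} (G : SimpleGraph V) (a b : V) (hab : a ≠ b) (p q : ℕ)
    (P0 P1 P2 : G.Walk a b)
    (h0 : P0.IsPath) (h1 : P1.IsPath) (h2 : P2.IsPath)
    (l0 : P0.length = p + 1) (l1 : P1.length = q + 1) (l2 : P2.length = q + 1)
    (d01 : ∀ v, v ∈ P0.support → v ∈ P1.support → v = a ∨ v = b)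
    (d02 : ∀ v, v ∈ P0.support → v ∈ P2.support → v = a ∨ v = b)
    (d12 : ∀ v, v ∈ P1.support → v ∈ P2.support → v = a ∨ v = b)
    (hE : G.edgeSet = {e | e ∈ P0.edges ∨ e ∈ P1.edges ∨ e ∈ P2.edges}) :
    IsLeast {n : ℕ | ∃ F : Set (Sym2 V), F ⊆ G.edgeSet ∧
        SatisfiesHab F ({v | v ∈ P0.support} ∪ {v | v ∈ P1.support}) ∧
        SatisfiesHab F ({v | v ∈ P0.support} ∪ {v | v ∈ P2.support}) ∧
        F.ncard = n}
      (p + 2 * q + 1) := by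
  constructor
  · -- membership : construct the optimal F
    obtain ⟨c1, ha1, W1, rfl⟩ := Walk.exists_eq_cons_of_ne hab P1
    obtain ⟨c2, ha2, W2, rfl⟩ := Walk.exists_eq_cons_of_ne hab P2
    rw [Walk.cons_isPath_iff] at h1 h2
    have lW1 : W1.length = q := by
      rw [Walk.length_cons] at l1; omega
    have lW2 : W2.length = q := by
      rw [Walk.length_cons] at l2; omega
    set F : Set (Sym2 V) :=
      {e | e ∈ P0.edges} ∪ ({e | e ∈ W1.edges} ∪ {e | e ∈ W2.edges}) with hFdef
    have hFsub : F ⊆ G.edgeSet := by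
      intro e he
      rw [hE]
      simp only [hFdef, Set.mem_union, Set.mem_setOf_eq] at he
      rcases he with he | he | he
      · exact Or.inl he
      · exact Or.inr (Or.inl (by rw [Walk.edges_cons]; exact List.mem_cons_of_mem _ he))
      · exact Or.inr (Or.inr (by rw [Walk.edges_cons]; exact List.mem_cons_of_mem _ he))
    have hcov0 : ∀ v ∈ P0.support, ∃ e ∈ F, v ∈ e := by
      intro v hv
      by_cases hva : v = a
      · subst hva
        obtain ⟨e, he, hve⟩ := exists_edge_of_ne_right P0 v hv hab
        exact ⟨e, Set.mem_union_left _ he, hve⟩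
      · obtain ⟨e, he, hve⟩ := exists_edge_of_ne_left P0 v hv hva
        exact ⟨e, Set.mem_union_left _ he, hve⟩
    -- coverage of habitat 1
    have hcov1 : ∀ v ∈ ({v | v ∈ P0.support} ∪ {v | v ∈ (Walk.cons ha1 W1).support} : Set V),
        ∃ e ∈ F, v ∈ e := by
      intro v hv
      rw [Set.mem_union] at hv
      rcases hv with hv | hv
      · exact hcov0 v hv
      · rw [Set.mem_setOf_eq, Walk.support_cons, List.mem_cons] at hv
        rcases hv with rfl | hv
        · exact hcov0 v P0.start_mem_support
        · by_cases hvb : v = b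
          · subst hvb; exact hcov0 v P0.end_mem_support
          · obtain ⟨e, he, hve⟩ := exists_edge_of_ne_right W1 v hv hvb
            exact ⟨e, Set.mem_union_right _ (Set.mem_union_left _ he), hve⟩
    have hcov2 : ∀ v ∈ ({v | v ∈ P0.support} ∪ {v | v ∈ (Walk.cons ha2 W2).support} : Set V),
        ∃ e ∈ F, v ∈ e := by
      intro v hv
      rw [Set.mem_union] at hv
      rcases hv with hv | hv
      · exact hcov0 v hv
      · rw [Set.mem_setOf_eq, Walk.support_cons, List.mem_cons] at hv
        rcases hv with rfl | hv
        · exact hcov0 v P0.start_mem_support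
        · by_cases hvb : v = b
          · subst hvb; exact hcov0 v P0.end_mem_support
          · obtain ⟨e, he, hve⟩ := exists_edge_of_ne_right W2 v hv hvb
            exact ⟨e, Set.mem_union_right _ (Set.mem_union_right _ he), hve⟩
    -- connectivity of habitat 1
    have hconn1 : ((SimpleGraph.fromEdgeSet F).induce
        ({v | v ∈ P0.support} ∪ {v | v ∈ (Walk.cons ha1 W1).support} : Set V)).Connected := by
      set H : Set V :=
        {v | v ∈ P0.support} ∪ {v | v ∈ (Walk.cons ha1 W1).support} with hHdef
      have hbH : b ∈ H := Set.mem_union_left _ P0.end_mem_support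
      rw [connected_iff_exists_forall_reachable]
      refine ⟨⟨b, hbH⟩, ?_⟩
      rintro ⟨x, hx⟩
      have key : ∀ (x : V) (hx : x ∈ H),
          ((SimpleGraph.fromEdgeSet F).induce H).Reachable ⟨x, hx⟩ ⟨b, hbH⟩ := by
        intro x hx
        have hx' := hx
        rw [hHdef, Set.mem_union] at hx'
        rcases hx' with hx0 | hx1
        · exact reach_induce (P0.dropUntil x hx0)
            (fun e he => Set.mem_union_left _ (P0.edges_dropUntil_subset hx0 he))
            (fun z hz => Set.mem_union_left _ (P0.support_dropUntil_subset hx0 hz)) hx hbH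
        · rw [Set.mem_setOf_eq, Walk.support_cons, List.mem_cons] at hx1
          rcases hx1 with rfl | hx1
          · have hx0 : x ∈ P0.support := P0.start_mem_support
            exact reach_induce (P0.dropUntil x hx0)
              (fun e he => Set.mem_union_left _ (P0.edges_dropUntil_subset hx0 he))
              (fun z hz => Set.mem_union_left _ (P0.support_dropUntil_subset hx0 hz)) hx hbH
          · exact reach_induce (W1.dropUntil x hx1)
              (fun e he => Set.mem_union_right _
                (Set.mem_union_left _ (W1.edges_dropUntil_subset hx1 he)))
              (fun z hz => Set.mem_union_right _ (by
                rw [Set.mem_setOf_eq, Walk.support_cons]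
                exact List.mem_cons_of_mem _ (W1.support_dropUntil_subset hx1 hz))) hx hbH
      exact (key x hx).symm
    have hconn2 : ((SimpleGraph.fromEdgeSet F).induce
        ({v | v ∈ P0.support} ∪ {v | v ∈ (Walk.cons ha2 W2).support} : Set V)).Connected := by
      set H : Set V :=
        {v | v ∈ P0.support} ∪ {v | v ∈ (Walk.cons ha2 W2).support} with hHdef
      have hbH : b ∈ H := Set.mem_union_left _ P0.end_mem_support
      rw [connected_iff_exists_forall_reachable]
      refine ⟨⟨b, hbH⟩, ?_⟩
      rintro ⟨x, hx⟩
      have key : ∀ (x : V) (hx : x ∈ H),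
          ((SimpleGraph.fromEdgeSet F).induce H).Reachable ⟨x, hx⟩ ⟨b, hbH⟩ := by
        intro x hx
        have hx' := hx
        rw [hHdef, Set.mem_union] at hx'
        rcases hx' with hx0 | hx1
        · exact reach_induce (P0.dropUntil x hx0)
            (fun e he => Set.mem_union_left _ (P0.edges_dropUntil_subset hx0 he))
            (fun z hz => Set.mem_union_left _ (P0.support_dropUntil_subset hx0 hz)) hx hbH
        · rw [Set.mem_setOf_eq, Walk.support_cons, List.mem_cons] at hx1
          rcases hx1 with rfl | hx1
          · have hx0 : x ∈ P0.support := P0.start_mem_support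
            exact reach_induce (P0.dropUntil x hx0)
              (fun e he => Set.mem_union_left _ (P0.edges_dropUntil_subset hx0 he))
              (fun z hz => Set.mem_union_left _ (P0.support_dropUntil_subset hx0 hz)) hx hbH
          · exact reach_induce (W2.dropUntil x hx1)
              (fun e he => Set.mem_union_right _
                (Set.mem_union_right _ (W2.edges_dropUntil_subset hx1 he)))
              (fun z hz => Set.mem_union_right _ (by
                rw [Set.mem_setOf_eq, Walk.support_cons]
                exact List.mem_cons_of_mem _ (W2.support_dropUntil_subset hx1 hz))) hx hbH
      exact (key x hx).symm
    -- disjointness of the three edge lists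
    have hd01 : Disjoint P0.edges.toFinset W1.edges.toFinset := by
      rw [Finset.disjoint_left]
      intro e he0 he1
      rw [List.mem_toFinset] at he0 he1
      have hnd : ¬ e.IsDiag := G.not_isDiag_of_mem_edgeSet (P0.edges_subset_edgeSet he0)
      have heab : e = s(a, b) := by
        apply edge_eq_ab hnd
        intro v hv
        exact d01 v (mem_support_of_edges P0 he0 hv)
          (by rw [Walk.support_cons]
              exact List.mem_cons_of_mem _ (mem_support_of_edges W1 he1 hv))
      exact h1.2 (mem_support_of_edges W1 he1
        (show a ∈ e by rw [heab]; exact Sym2.mem_mk_left a b))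
    have hd02 : Disjoint P0.edges.toFinset W2.edges.toFinset := by
      rw [Finset.disjoint_left]
      intro e he0 he1
      rw [List.mem_toFinset] at he0 he1
      have hnd : ¬ e.IsDiag := G.not_isDiag_of_mem_edgeSet (P0.edges_subset_edgeSet he0)
      have heab : e = s(a, b) := by
        apply edge_eq_ab hnd
        intro v hv
        exact d02 v (mem_support_of_edges P0 he0 hv)
          (by rw [Walk.support_cons]
              exact List.mem_cons_of_mem _ (mem_support_of_edges W2 he1 hv))
      exact h2.2 (mem_support_of_edges W2 he1
        (show a ∈ e by rw [heab]; exact Sym2.mem_mk_left a b))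
    have hd12 : Disjoint W1.edges.toFinset W2.edges.toFinset := by
      rw [Finset.disjoint_left]
      intro e he1 he2
      rw [List.mem_toFinset] at he1 he2
      have hnd : ¬ e.IsDiag := G.not_isDiag_of_mem_edgeSet (W1.edges_subset_edgeSet he1)
      have heab : e = s(a, b) := by
        apply edge_eq_ab hnd
        intro v hv
        refine d12 v ?_ ?_
        · rw [Walk.support_cons]
          exact List.mem_cons_of_mem _ (mem_support_of_edges W1 he1 hv)
        · rw [Walk.support_cons]
          exact List.mem_cons_of_mem _ (mem_support_of_edges W2 he2 hv)
      exact h1.2 (mem_support_of_edges W1 he1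
        (show a ∈ e by rw [heab]; exact Sym2.mem_mk_left a b))
    refine ⟨F, hFsub, ⟨hcov1, hconn1⟩, ⟨hcov2, hconn2⟩, ?_⟩
    have hFeq : F = ↑(P0.edges.toFinset ∪ (W1.edges.toFinset ∪ W2.edges.toFinset)) := by
      ext e
      simp [hFdef]
    rw [hFeq, Set.ncard_coe_finset,
      Finset.card_union_of_disjoint (by
        rw [Finset.disjoint_union_right]; exact ⟨hd01, hd02⟩),
      Finset.card_union_of_disjoint hd12]
    have e0 : P0.edges.toFinset.card = p + 1 := by
      rw [List.toFinset_card_of_nodup h0.edges_nodup, Walk.length_edges, l0]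
    have e1 : W1.edges.toFinset.card = q := by
      rw [List.toFinset_card_of_nodup h1.1.edges_nodup, Walk.length_edges, lW1]
    have e2 : W2.edges.toFinset.card = q := by
      rw [List.toFinset_card_of_nodup h2.1.edges_nodup, Walk.length_edges, lW2]
    omega
  · -- lower bound
    rintro n ⟨F, hFsub, ⟨hcov1, hconn1⟩, ⟨hcov2, hconn2⟩, rfl⟩
    have hGfin : G.edgeSet.Finite := by
      rw [hE]
      have hsub : {e : Sym2 V | e ∈ P0.edges ∨ e ∈ P1.edges ∨ e ∈ P2.edges} ⊆
          ↑(P0.edges.toFinset ∪ P1.edges.toFinset ∪ P2.edges.toFinset) := by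
        intro e he
        simp only [Set.mem_setOf_eq] at he
        simp only [Finset.coe_union, Set.mem_union, Finset.mem_coe, List.mem_toFinset]
        tauto
      exact Set.Finite.subset (Finset.finite_toSet _) hsub
    have hFfin : F.Finite := hGfin.subset hFsub
    set T1 : Finset V := P0.support.toFinset ∪ P1.support.toFinset with hT1
    set T2 : Finset V := P0.support.toFinset ∪ P2.support.toFinset with hT2
    have hT1eq : ({v | v ∈ P0.support} ∪ {v | v ∈ P1.support} : Set V) = ↑T1 := by
      ext v; simp [hT1]
    have hT2eq : ({v | v ∈ P0.support} ∪ {v | v ∈ P2.support} : Set V) = ↑T2 := by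
      ext v; simp [hT2]
    rw [hT1eq] at hconn1
    rw [hT2eq] at hconn2
    have hb1 := hab_lower hFfin T1 hconn1
    have hb2 := hab_lower hFfin T2 hconn2
    have hcard : ∀ (P : G.Walk a b), P.IsPath → P.length = q + 1 →
        (∀ v, v ∈ P0.support → v ∈ P.support → v = a ∨ v = b) →
        (P0.support.toFinset ∪ P.support.toFinset).card = p + q + 2 := by
      intro P hP hl hd
      have hint : P0.support.toFinset ∩ P.support.toFinset = {a, b} := by
        ext v
        simp only [Finset.mem_inter, List.mem_toFinset, Finset.mem_insert, Finset.mem_singleton]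
        constructor
        · rintro ⟨hv0, hv1⟩; exact hd v hv0 hv1
        · rintro (rfl | rfl)
          · exact ⟨P0.start_mem_support, P.start_mem_support⟩
          · exact ⟨P0.end_mem_support, P.end_mem_support⟩
      have h := Finset.card_union_add_card_inter P0.support.toFinset P.support.toFinset
      rw [hint] at h
      have c0 : P0.support.toFinset.card = p + 2 := by
        rw [List.toFinset_card_of_nodup h0.support_nodup, Walk.length_support, l0]
      have c1 : P.support.toFinset.card = q + 2 := by
        rw [List.toFinset_card_of_nodup hP.support_nodup, Walk.length_support, hl]
      have cab : ({a, b} : Finset V).card = 2 := by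
        rw [Finset.card_insert_of_notMem (by simpa using hab), Finset.card_singleton]
      omega
    have hc1 : T1.card = p + q + 2 := hcard P1 h1 l1 d01
    have hc2 : T2.card = p + q + 2 := hcard P2 h2 l2 d02
    set S1 := F ∩ {e | ∀ v ∈ e, v ∈ (↑T1 : Set V)} with hS1def
    set S2 := F ∩ {e | ∀ v ∈ e, v ∈ (↑T2 : Set V)} with hS2def
    by_cases hq : q = 0
    · subst hq
      have hle : S1.ncard ≤ F.ncard := Set.ncard_le_ncard Set.inter_subset_left hFfin
      omega
    · have hq1 : ∀ (P : G.Walk a b), P.IsPath → P.length = q + 1 → s(a, b) ∉ P.edges := by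
        intro P hP hl hmem
        have := length_one_of_edge P hP hab hmem
        omega
      have hinterP0 : S1 ∩ S2 ⊆ {e : Sym2 V | e ∈ P0.edges} := by
        rintro e ⟨⟨heF, h1e⟩, -, h2e⟩
        have heG : e ∈ G.edgeSet := hFsub heF
        have hnd : ¬ e.IsDiag := G.not_isDiag_of_mem_edgeSet heG
        rw [hE] at heG
        rcases heG with h | h | h
        · exact h
        · exfalso
          have heab : e = s(a, b) := by
            apply edge_eq_ab hnd
            intro v hv
            have hvs1 : v ∈ P1.support := mem_support_of_edges P1 h hv
            have hvT2 : v ∈ (↑T2 : Set V) := h2e v hv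
            have hv' : v ∈ P0.support ∨ v ∈ P2.support := by
              simpa [hT2] using hvT2
            rcases hv' with h' | h'
            · exact d01 v h' hvs1
            · exact d12 v hvs1 h'
          exact hq1 P1 h1 l1 (heab ▸ h)
        · exfalso
          have heab : e = s(a, b) := by
            apply edge_eq_ab hnd
            intro v hv
            have hvs2 : v ∈ P2.support := mem_support_of_edges P2 h hv
            have hvT1 : v ∈ (↑T1 : Set V) := h1e v hv
            have hv' : v ∈ P0.support ∨ v ∈ P1.support := by
              simpa [hT1] using hvT1
            rcases hv' with h' | h'
            · exact d02 v h' hvs2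
            · exact d12 v h' hvs2
          exact hq1 P2 h2 l2 (heab ▸ h)
      have hS1fin : S1.Finite := hFfin.inter_of_left _
      have hS2fin : S2.Finite := hFfin.inter_of_left _
      have hun := Set.ncard_union_add_ncard_inter S1 S2 hS1fin hS2fin
      have hIle : (S1 ∩ S2).ncard ≤ p + 1 := by
        have hA : (S1 ∩ S2).ncard ≤ {e : Sym2 V | e ∈ P0.edges}.ncard :=
          Set.ncard_le_ncard hinterP0 (P0.edges.finite_toSet)
        have hB : {e : Sym2 V | e ∈ P0.edges}.ncard = p + 1 := by
          have hco : {e : Sym2 V | e ∈ P0.edges} = ↑P0.edges.toFinset := by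
            ext e; simp
          rw [hco, Set.ncard_coe_finset, List.toFinset_card_of_nodup h0.edges_nodup,
            Walk.length_edges, l0]
        omega
      have hUF : (S1 ∪ S2).ncard ≤ F.ncard :=
        Set.ncard_le_ncard (Set.union_subset Set.inter_subset_left Set.inter_subset_left) hFfin
      omega
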